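/- Fourier form of the propagated covariance kernel. Let K : ℝ^m × ℝ^m → ℂ be continuous with compact support and let f : ℝ^m → ℂ be bounded measurable. Write k_𝔣(x) := c_m·(𝔣/(2π))^(m/2)·exp(i·𝔣·|x|²/2) with c_m := exp(−i·m·π/4). Then for all x, y ∈ ℝ^m, ∫_{ℝ^m}∫_{ℝ^m} k_𝔣(x−p)·exp(f(p))·K(p,q)·exp(conj(f(q)))·conj(k_𝔣(y−q)) dp dq = n_𝔣(x) · 𝓕_{2m}(K_f)(𝔣x, −𝔣y) · conj(n_𝔣(y)). -/

import Mathlib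

open MeasureTheory Complex

noncomputable section

/-- `ℝ^m` with its Euclidean structure. -/
abbrev Em (m : ℕ) := EuclideanSpace ℝ (Fin m)

/-- The chirp function `n_𝔣(x) = exp(i·𝔣·|x|²/2)`. -/
def chirp (m : ℕ) (fr : ℝ) (x : Em m) : ℂ :=
  Complex.exp (Complex.I * fr * (‖x‖ : ℂ) ^ 2 / 2)

/-- The twisted kernel
`K_f(p,q) = 𝔣^m · n_𝔣(p) · e^{f(p)} · K(p,q) · e^{conj(f(q))} · conj(n_𝔣(q))`. -/
def kerF (m : ℕ) (fr : ℝ) (K : Em m → Em m → ℂ) (f : Em m → ℂ) (p q : Em m) : ℂ :=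
  (fr : ℂ) ^ m * chirp m fr p * Complex.exp (f p) * K p q *
    Complex.exp ((starRingEnd ℂ) (f q)) * (starRingEnd ℂ) (chirp m fr q)

/-- The unitary Fourier transform on `ℝ^{2m} = ℝ^m × ℝ^m`,
`𝓕_{2m}(Φ)(ξ,η) = (2π)^{-m} ∫∫ Φ(p,q)·exp(-i(⟨ξ,p⟩+⟨η,q⟩)) dp dq`. -/
def FT2m (m : ℕ) (Φ : Em m → Em m → ℂ) (ξ η : Em m) : ℂ :=
  (((2 * Real.pi) ^ m : ℝ) : ℂ)⁻¹ *
    ∫ p : Em m, ∫ q : Em m,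
      Φ p q * Complex.exp (-Complex.I * ((inner ℝ ξ p : ℝ) + (inner ℝ η q : ℝ)))

/-- The forward map `F(f)(x,y) = |𝓕_{2m}(K_f)(𝔣x, −𝔣y)|²`. -/
def FwdF (m : ℕ) (fr : ℝ) (K : Em m → Em m → ℂ) (f : Em m → ℂ) (x y : Em m) : ℝ :=
  ‖FT2m m (kerF m fr K f) (fr • x) (-(fr • y))‖ ^ 2

/-- The Fresnel convolution kernel
`k_𝔣(x) = c_m·(𝔣/(2π))^{m/2}·exp(i·𝔣·|x|²/2)` with `c_m = exp(−i·m·π/4)`. -/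
def fresnelKernel (m : ℕ) (fr : ℝ) (x : Em m) : ℂ :=
  Complex.exp (-Complex.I * m * Real.pi / 4) *
    ((fr / (2 * Real.pi)) ^ ((m : ℝ) / 2) : ℝ) *
    Complex.exp (Complex.I * fr * (‖x‖ : ℂ) ^ 2 / 2)

lemma exp_merge_L (t1 t2 t3 t4 r A : ℂ) :
    Complex.exp t1 * r * Complex.exp t2 * A * (Complex.exp t3 * r * Complex.exp t4)
    = r * r * A * Complex.exp (t1 + t2 + t3 + t4) := by
  rw [Complex.exp_add, Complex.exp_add, Complex.exp_add]; ring

lemma exp_merge_R (s1 s2 s3 s4 s5 w c A : ℂ) :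
    Complex.exp s1 * Complex.exp s2 * w * (c * Complex.exp s3 * Complex.exp s4 * A * Complex.exp s5)
    = w * c * A * Complex.exp (s1 + s2 + s3 + s4 + s5) := by
  rw [Complex.exp_add, Complex.exp_add, Complex.exp_add, Complex.exp_add]; ring

lemma pointwise_key (m : ℕ) {fr : ℝ} (hfr : 0 < fr) (x y p q : Em m) (A : ℂ) :
    fresnelKernel m fr (x - p) * A * (starRingEnd ℂ) (fresnelKernel m fr (y - q))
    = chirp m fr x * (starRingEnd ℂ) (chirp m fr y) * (((2 * Real.pi) ^ m : ℝ) : ℂ)⁻¹ *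
      ((fr : ℂ) ^ m * chirp m fr p * (starRingEnd ℂ) (chirp m fr q) * A *
        Complex.exp (-Complex.I * ((inner ℝ (fr • x) p : ℝ) + (inner ℝ (-(fr • y)) q : ℝ)))) := by
  have hr : (((fr / (2 * Real.pi)) ^ ((m : ℝ) / 2) : ℝ) : ℂ) *
      (((fr / (2 * Real.pi)) ^ ((m : ℝ) / 2) : ℝ) : ℂ)
      = ((fr ^ m / (2 * Real.pi) ^ m : ℝ) : ℂ) := by
    rw [← Complex.ofReal_mul, ← Real.rpow_add (by positivity)]
    norm_num
    rw [div_pow]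
  have hxp : ((‖x - p‖ : ℝ) : ℂ) ^ 2
      = (‖x‖ : ℂ) ^ 2 - 2 * ((inner ℝ x p : ℝ) : ℂ) + (‖p‖ : ℂ) ^ 2 := by
    rw [← Complex.ofReal_pow, norm_sub_sq_real]; push_cast; ring
  have hyq : ((‖y - q‖ : ℝ) : ℂ) ^ 2
      = (‖y‖ : ℂ) ^ 2 - 2 * ((inner ℝ y q : ℝ) : ℂ) + (‖q‖ : ℂ) ^ 2 := by
    rw [← Complex.ofReal_pow, norm_sub_sq_real]; push_cast; ring
  have hix : ((inner ℝ (fr • x) p : ℝ) : ℂ) = fr * ((inner ℝ x p : ℝ) : ℂ) := by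
    rw [real_inner_smul_left]; push_cast; ring
  have hiy : ((inner ℝ (-(fr • y)) q : ℝ) : ℂ) = -(fr * ((inner ℝ y q : ℝ) : ℂ)) := by
    rw [inner_neg_left, real_inner_smul_left]; push_cast; ring
  have hcexp : ∀ z : ℂ, (starRingEnd ℂ) (Complex.exp z)
      = Complex.exp ((starRingEnd ℂ) z) := by
    intro z; exact (Complex.exp_conj z).symm
  have c1 : (starRingEnd ℂ) (-Complex.I * (m : ℂ) * (Real.pi : ℂ) / 4)
      = Complex.I * m * Real.pi / 4 := by
    simp [map_div₀, map_ofNat, Complex.conj_I]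
    try ring
  have c2 : ∀ t : ℝ, (starRingEnd ℂ) (Complex.I * (fr : ℂ) * (t : ℂ) ^ 2 / 2)
      = -(Complex.I * fr * (t : ℂ) ^ 2 / 2) := by
    intro t
    simp [map_div₀, map_ofNat, Complex.conj_I, Complex.conj_ofReal]
    try ring
  simp only [fresnelKernel, chirp, map_mul, Complex.conj_ofReal, hcexp, c1, c2,
    hxp, hyq, hix, hiy]
  rw [exp_merge_L, exp_merge_R, hr]
  congr 1
  · push_cast; ring
  · congr 1
    simp only [map_sub, map_add, map_mul, map_pow, map_div₀, map_one, map_ofNat,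
      Complex.conj_I, Complex.conj_ofReal]
    ring


/-- auxiliary: integrand of the double Fourier integral as a function on the product. -/
def auxG (m : ℕ) (fr : ℝ) (K : Em m → Em m → ℂ) (f : Em m → ℂ) (x y : Em m)
    (z : Em m × Em m) : ℂ :=
  kerF m fr K f z.1 z.2 *
    Complex.exp (-Complex.I * ((inner ℝ (fr • x) z.1 : ℝ) + (inner ℝ (-(fr • y)) z.2 : ℝ)))

lemma chirp_continuous (m : ℕ) (fr : ℝ) : Continuous (chirp m fr) := by
  unfold chirp
  exact (((continuous_const.mul
    ((Complex.continuous_ofReal.comp continuous_norm).pow 2))).div_const 2).cexp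

lemma chirp_norm (m : ℕ) (fr : ℝ) (v : Em m) : ‖chirp m fr v‖ = 1 := by
  have h : Complex.I * fr * (‖v‖ : ℂ) ^ 2 / 2 = ((fr * ‖v‖ ^ 2 / 2 : ℝ) : ℂ) * Complex.I := by
    push_cast; ring
  rw [chirp, h, Complex.norm_exp_ofReal_mul_I]

/-- Fourier form of the propagated covariance kernel:
`∫∫ k_𝔣(x−p)·e^{f(p)}·K(p,q)·e^{conj(f(q))}·conj(k_𝔣(y−q)) dp dq
  = n_𝔣(x)·𝓕_{2m}(K_f)(𝔣x, −𝔣y)·conj(n_𝔣(y))`. -/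
theorem propagated_covariance_fourier_form {m : ℕ} (hm : 1 ≤ m)
    (fr : ℝ) (hfr : 0 < fr)
    (K : Em m → Em m → ℂ)
    (hKcont : Continuous fun pq : Em m × Em m => K pq.1 pq.2)
    (hKsupp : HasCompactSupport fun pq : Em m × Em m => K pq.1 pq.2)
    (f : Em m → ℂ) (hf : Measurable f)
    (hb : ∃ C : ℝ, ∀ x : Em m, ‖f x‖ ≤ C)
    (x y : Em m) :
    (∫ q : Em m, ∫ p : Em m,
        fresnelKernel m fr (x - p) * Complex.exp (f p) * K p q *
          Complex.exp ((starRingEnd ℂ) (f q)) *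
          (starRingEnd ℂ) (fresnelKernel m fr (y - q)))
      = chirp m fr x * FT2m m (kerF m fr K f) (fr • x) (-(fr • y)) *
        (starRingEnd ℂ) (chirp m fr y) := by
  obtain ⟨C, hC⟩ := hb
  have hKint : Integrable (fun z : Em m × Em m => K z.1 z.2) :=
    hKcont.integrable_of_hasCompactSupport hKsupp
  -- bounded measurable multiplier
  set φ : Em m × Em m → ℂ := fun z =>
    (fr : ℂ) ^ m * chirp m fr z.1 * Complex.exp (f z.1) *
      Complex.exp ((starRingEnd ℂ) (f z.2)) * (starRingEnd ℂ) (chirp m fr z.2) *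
      Complex.exp (-Complex.I * ((inner ℝ (fr • x) z.1 : ℝ) + (inner ℝ (-(fr • y)) z.2 : ℝ)))
    with hφdef
  have hφmeas : Measurable φ := by
    apply Measurable.mul
    apply Measurable.mul
    apply Measurable.mul
    apply Measurable.mul
    apply Measurable.mul
    · exact measurable_const
    · exact ((chirp_continuous m fr).measurable).comp measurable_fst
    · exact Complex.measurable_exp.comp (hf.comp measurable_fst)
    · exact Complex.measurable_exp.comp
        (Complex.continuous_conj.measurable.comp (hf.comp measurable_snd))
    · exact Complex.continuous_conj.measurable.comp
        (((chirp_continuous m fr).measurable).comp measurable_snd)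
    · apply Measurable.cexp
      apply Measurable.mul measurable_const
      apply Measurable.add
      · exact Complex.measurable_ofReal.comp
          (Continuous.inner continuous_const continuous_fst).measurable
      · exact Complex.measurable_ofReal.comp
          (Continuous.inner continuous_const continuous_snd).measurable
  have hφbdd : ∀ z, ‖φ z‖ ≤ fr ^ m * Real.exp C * Real.exp C := by
    intro z
    have h1 : ‖Complex.exp (f z.1)‖ ≤ Real.exp C := by
      rw [Complex.norm_exp]
      exact Real.exp_le_exp.2 ((Complex.re_le_norm _).trans (hC z.1))
    have h2 : ‖Complex.exp ((starRingEnd ℂ) (f z.2))‖ ≤ Real.exp C := by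
      rw [Complex.norm_exp, Complex.conj_re]
      exact Real.exp_le_exp.2 ((Complex.re_le_norm _).trans (hC z.2))
    have hE : ‖Complex.exp (-Complex.I *
        ((inner ℝ (fr • x) z.1 : ℝ) + (inner ℝ (-(fr • y)) z.2 : ℝ)))‖ = 1 := by
      have h : -Complex.I * (((inner ℝ (fr • x) z.1 : ℝ) : ℂ) + ((inner ℝ (-(fr • y)) z.2 : ℝ) : ℂ))
          = ((-((inner ℝ (fr • x) z.1 : ℝ) + (inner ℝ (-(fr • y)) z.2 : ℝ)) : ℝ) : ℂ) * Complex.I := by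
        push_cast; ring
      rw [h, Complex.norm_exp_ofReal_mul_I]
    have hnorm : ‖φ z‖ = fr ^ m * (‖Complex.exp (f z.1)‖ *
        ‖Complex.exp ((starRingEnd ℂ) (f z.2))‖) := by
      simp only [hφdef, norm_mul, norm_pow, chirp_norm, Complex.norm_conj,
        Complex.norm_real, Real.norm_eq_abs, hE, mul_one, one_mul, abs_of_pos hfr]
      ring
    rw [hnorm]
    have hmul := mul_le_mul h1 h2 (norm_nonneg _) (Real.exp_pos C).le
    calc fr ^ m * (‖Complex.exp (f z.1)‖ *
          ‖Complex.exp ((starRingEnd ℂ) (f z.2))‖)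
        ≤ fr ^ m * (Real.exp C * Real.exp C) :=
          mul_le_mul_of_nonneg_left hmul (by positivity)
      _ = fr ^ m * Real.exp C * Real.exp C := by ring
  have hGint : Integrable (auxG m fr K f x y) := by
    have heq : auxG m fr K f x y = fun z => φ z * K z.1 z.2 := by
      funext z
      simp only [auxG, kerF, hφdef]
      ring
    rw [heq]
    exact hKint.bdd_mul hφmeas.aestronglyMeasurable
      (Filter.Eventually.of_forall hφbdd)
  -- pointwise identity
  have hpt : ∀ p q : Em m,
      fresnelKernel m fr (x - p) * Complex.exp (f p) * K p q *
          Complex.exp ((starRingEnd ℂ) (f q)) *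
          (starRingEnd ℂ) (fresnelKernel m fr (y - q))
      = (chirp m fr x * (starRingEnd ℂ) (chirp m fr y) * (((2 * Real.pi) ^ m : ℝ) : ℂ)⁻¹) *
        auxG m fr K f x y (p, q) := by
    intro p q
    have h := pointwise_key m hfr x y p q
      (Complex.exp (f p) * K p q * Complex.exp ((starRingEnd ℂ) (f q)))
    calc fresnelKernel m fr (x - p) * Complex.exp (f p) * K p q *
          Complex.exp ((starRingEnd ℂ) (f q)) *
          (starRingEnd ℂ) (fresnelKernel m fr (y - q))
        = fresnelKernel m fr (x - p) *
            (Complex.exp (f p) * K p q * Complex.exp ((starRingEnd ℂ) (f q))) *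
            (starRingEnd ℂ) (fresnelKernel m fr (y - q)) := by ring
      _ = chirp m fr x * (starRingEnd ℂ) (chirp m fr y) * (((2 * Real.pi) ^ m : ℝ) : ℂ)⁻¹ *
            ((fr : ℂ) ^ m * chirp m fr p * (starRingEnd ℂ) (chirp m fr q) *
              (Complex.exp (f p) * K p q * Complex.exp ((starRingEnd ℂ) (f q))) *
              Complex.exp (-Complex.I *
                ((inner ℝ (fr • x) p : ℝ) + (inner ℝ (-(fr • y)) q : ℝ)))) := h
      _ = (chirp m fr x * (starRingEnd ℂ) (chirp m fr y) * (((2 * Real.pi) ^ m : ℝ) : ℂ)⁻¹) *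
            auxG m fr K f x y (p, q) := by
          simp only [auxG, kerF]
          ring
  -- main computation
  simp_rw [hpt, integral_const_mul]
  have hswap : (∫ q : Em m, ∫ p : Em m, auxG m fr K f x y (p, q))
      = ∫ p : Em m, ∫ q : Em m, auxG m fr K f x y (p, q) := by
    apply integral_integral_swap (f := fun q p => auxG m fr K f x y (p, q))
    have : Integrable (auxG m fr K f x y ∘ Prod.swap) ((volume : Measure (Em m)).prod volume) := by
      apply MeasureTheory.Integrable.swap
      rwa [← MeasureTheory.Measure.volume_eq_prod]
    exact this
  rw [hswap, FT2m]
  simp only [auxG]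
  ring


end
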